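/- Let 𝒯ᵢ be the automorphism of the pair (Fₙ, Mₙ) with first component xᵢ ↦ xᵢ⁻¹ (fixing other xⱼ) and second component fixing each Kⱼ (extended semilinearly, so 𝒯ᵢ²(g ▷ m) = 𝒯ᵢ¹(g) ▷ m for generators m). Then for 1 ≤ i ≤ n−1: 𝒯ᵢ ∘ 𝒮ᵢ = 𝒮ᵢ ∘ 𝒯_{i+1} as automorphisms of the pair, and in particular the second components agree on all of Mₙ. -/

import Mathlib

/-- The free group `Fₙ` on generators `x₀, …, x_{n-1}` (0-based indexing). -/
abbrev FG (n : ℕ) := FreeGroup (Fin n)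
/-- The group ring `ℤ[Fₙ]`. -/
abbrev GR (n : ℕ) := MonoidAlgebra ℤ (FG n)
/-- The free `ℤ[Fₙ]`-module `Mₙ` on `K₀, …, K_{n-1}`. -/
abbrev M (n : ℕ) := Fin n →₀ GR n

/-- The generator `xᵢ`. -/
def X {n : ℕ} (i : Fin n) : FG n := FreeGroup.of i
/-- The module generator `Kᵢ`. -/
noncomputable def K {n : ℕ} (i : Fin n) : M n := Finsupp.single i 1

/-- The action `g ▷ m` of `Fₙ` on `Mₙ`, via the `ℤ[Fₙ]`-module structure. -/
noncomputable def act {n : ℕ} (g : FG n) (m : M n) : M n :=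
  (MonoidAlgebra.of ℤ (FG n) g) • m

def fin0 (n i : ℕ) (h : i + 1 < n) : Fin n := ⟨i, Nat.lt_of_succ_lt h⟩
def fin1 (n i : ℕ) (h : i + 1 < n) : Fin n := ⟨i + 1, h⟩

/-- The additive endomorphism of `Mₙ`, semilinear over the group endomorphism `f1`
(i.e. `m ↦ g ▷ m` goes to `m ↦ f1 g ▷ m`), determined by the images `t i` of the
generators `K i`. -/
noncomputable def lift2 {n : ℕ} (f1 : FG n →* FG n) (t : Fin n → M n) : M n →+ M n :=
  Finsupp.liftAddHom fun i =>
    { toFun := fun r => (MonoidAlgebra.mapDomainRingHom ℤ f1 r) • t i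
      map_zero' := by simp
      map_add' := by intro a b; rw [map_add, add_smul] }

lemma lift2_single {n : ℕ} (f1 : FG n →* FG n) (t : Fin n → M n) (j : Fin n) (r : GR n) :
    lift2 f1 t (Finsupp.single j r) = (MonoidAlgebra.mapDomainRingHom ℤ f1 r) • t j := by
  simp [lift2]

lemma lift2_smul {n : ℕ} (f1 : FG n →* FG n) (t : Fin n → M n) (r : GR n) (m : M n) :
    lift2 f1 t (r • m) = (MonoidAlgebra.mapDomainRingHom ℤ f1 r) • lift2 f1 t m := by
  induction m using Finsupp.induction with
  | zero => simp
  | single_add j s m _ _ ih =>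
    rw [smul_add, map_add, map_add, ih, Finsupp.smul_single, lift2_single, lift2_single,
      smul_add, smul_eq_mul, map_mul, mul_smul]

lemma mapDomainRingHom_comp_apply {n : ℕ} (f g : FG n →* FG n) (r : GR n) :
    MonoidAlgebra.mapDomainRingHom ℤ f (MonoidAlgebra.mapDomainRingHom ℤ g r) =
      MonoidAlgebra.mapDomainRingHom ℤ (f.comp g) r := by
  rw [MonoidAlgebra.mapDomainRingHom_comp]; rfl

/-- First component of the lifted Artin automorphism `𝒮ᵢ`. -/
def S1 (n i : ℕ) (h : i + 1 < n) : FG n →* FG n :=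
  FreeGroup.lift fun j =>
    if (j : ℕ) = i then X (fin1 n i h)
    else if (j : ℕ) = i + 1 then (X (fin1 n i h))⁻¹ * X (fin0 n i h) * X (fin1 n i h)
    else X j

/-- Second component of the lifted Artin automorphism `𝒮ᵢ`:
`Kᵢ ↦ Kᵢ + K_{i+1} − x_{i+1}⁻¹ ▷ Kᵢ`, `K_{i+1} ↦ x_{i+1}⁻¹ ▷ Kᵢ`, fixing other `Kⱼ`,
extended semilinearly over `𝒮ᵢ¹`. -/
noncomputable def S2 (n i : ℕ) (h : i + 1 < n) : M n →+ M n :=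
  lift2 (S1 n i h) fun j =>
    if (j : ℕ) = i then
      K (fin0 n i h) + K (fin1 n i h) - act (X (fin1 n i h))⁻¹ (K (fin0 n i h))
    else if (j : ℕ) = i + 1 then act (X (fin1 n i h))⁻¹ (K (fin0 n i h))
    else K j

/-- First component of the inverse `𝒮̄ᵢ`: `xᵢ ↦ xᵢ x_{i+1} xᵢ⁻¹`, `x_{i+1} ↦ xᵢ`. -/
def Sbar1 (n i : ℕ) (h : i + 1 < n) : FG n →* FG n :=
  FreeGroup.lift fun j =>
    if (j : ℕ) = i then X (fin0 n i h) * X (fin1 n i h) * (X (fin0 n i h))⁻¹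
    else if (j : ℕ) = i + 1 then X (fin0 n i h)
    else X j

/-- Second component of the inverse `𝒮̄ᵢ`: `Kᵢ ↦ xᵢ ▷ K_{i+1}`,
`K_{i+1} ↦ Kᵢ + K_{i+1} − xᵢ ▷ K_{i+1}`, fixing other `Kⱼ`. -/
noncomputable def Sbar2 (n i : ℕ) (h : i + 1 < n) : M n →+ M n :=
  lift2 (Sbar1 n i h) fun j =>
    if (j : ℕ) = i then act (X (fin0 n i h)) (K (fin1 n i h))
    else if (j : ℕ) = i + 1 then
      K (fin0 n i h) + K (fin1 n i h) - act (X (fin0 n i h)) (K (fin1 n i h))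
    else K j

/-- First component of the transposition automorphism `ℛᵢ`. -/
def R1 (n i : ℕ) (h : i + 1 < n) : FG n →* FG n :=
  FreeGroup.lift fun j =>
    if (j : ℕ) = i then X (fin1 n i h)
    else if (j : ℕ) = i + 1 then X (fin0 n i h)
    else X j

/-- Second component of `ℛᵢ`: swaps `Kᵢ` and `K_{i+1}`, fixing other `Kⱼ`. -/
noncomputable def R2 (n i : ℕ) (h : i + 1 < n) : M n →+ M n :=
  lift2 (R1 n i h) fun j =>
    if (j : ℕ) = i then K (fin1 n i h)
    else if (j : ℕ) = i + 1 then K (fin0 n i h)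
    else K j

/-- First component of the inversion automorphism `𝒯ᵢ`: `xᵢ ↦ xᵢ⁻¹`. -/
def T1 (n i : ℕ) (h : i < n) : FG n →* FG n :=
  FreeGroup.lift fun j => if (j : ℕ) = i then (X (⟨i, h⟩ : Fin n))⁻¹ else X j

/-- Second component of `𝒯ᵢ`: fixes each `Kⱼ`, extended semilinearly over `𝒯ᵢ¹`. -/
noncomputable def T2 (n i : ℕ) (h : i < n) : M n →+ M n :=
  lift2 (T1 n i h) fun j => K j

/-- relation `𝒯ᵢ ∘ 𝒮ᵢ = 𝒮ᵢ ∘ 𝒯_{i+1}` for automorphisms of the pair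
`(Fₙ, Mₙ)`; in particular the second components agree on all of `Mₙ`. -/
theorem liftedArtin_TS_comm (n i : ℕ) (h : i + 1 < n) :
    (T1 n i (Nat.lt_of_succ_lt h)).comp (S1 n i h) =
      (S1 n i h).comp (T1 n (i + 1) h) ∧
    (T2 n i (Nat.lt_of_succ_lt h)).comp (S2 n i h) =
      (S2 n i h).comp (T2 n (i + 1) h) := by
  have hi : i ≠ i + 1 := by omega
  have part1 : (T1 n i (Nat.lt_of_succ_lt h)).comp (S1 n i h) =
      (S1 n i h).comp (T1 n (i + 1) h) := by
    apply FreeGroup.ext_hom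
    intro a
    by_cases h1 : (a : ℕ) = i
    · simp [S1, T1, X, fin0, fin1, h1, hi]
    · by_cases h2 : (a : ℕ) = i + 1
      · simp [S1, T1, X, fin0, fin1, h1, h2, hi, mul_assoc]
      · simp [S1, T1, X, fin0, fin1, h1, h2]
  refine ⟨part1, ?_⟩
  -- T2 fixes the generator images of S2
  have hT2K : ∀ j : Fin n, T2 n i (Nat.lt_of_succ_lt h) (K j) = K j := by
    intro j
    rw [K, T2, lift2_single]
    simp [K]
  have T2smul : ∀ (r : GR n) (m : M n), T2 n i (Nat.lt_of_succ_lt h) (r • m) =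
      (MonoidAlgebra.mapDomainRingHom ℤ (T1 n i (Nat.lt_of_succ_lt h)) r) •
        T2 n i (Nat.lt_of_succ_lt h) m := fun r m => lift2_smul _ _ r m
  have hT2act : T2 n i (Nat.lt_of_succ_lt h) (act (X (fin1 n i h))⁻¹ (K (fin0 n i h))) =
      act (X (fin1 n i h))⁻¹ (K (fin0 n i h)) := by
    rw [act, T2smul, hT2K]
    congr 1
    simp [MonoidAlgebra.of_apply, MonoidAlgebra.mapDomainRingHom,
      Finsupp.mapDomain_single]
    congr 2
    simp [T1, X, fin1, hi.symm]
  apply Finsupp.addHom_ext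
  intro j r
  have hS2K : S2 n i h (Finsupp.single j r) =
      (MonoidAlgebra.mapDomainRingHom ℤ (S1 n i h) r) •
        (if (j : ℕ) = i then
          K (fin0 n i h) + K (fin1 n i h) - act (X (fin1 n i h))⁻¹ (K (fin0 n i h))
        else if (j : ℕ) = i + 1 then act (X (fin1 n i h))⁻¹ (K (fin0 n i h))
        else K j) := by rw [S2, lift2_single]
  rw [AddMonoidHom.comp_apply, AddMonoidHom.comp_apply, hS2K, T2smul]
  rw [show (T2 n (i+1) h) (Finsupp.single j r) =
      Finsupp.single j ((MonoidAlgebra.mapDomainRingHom ℤ (T1 n (i+1) h) r) * 1) from by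
    rw [T2, lift2_single, K, Finsupp.smul_single, smul_eq_mul]]
  rw [mul_one, S2, lift2_single, mapDomainRingHom_comp_apply, mapDomainRingHom_comp_apply,
    ← part1]
  congr 1
  split_ifs with c1 c2
  · rw [map_sub, map_add, hT2K, hT2K, hT2act]
  · exact hT2act
  · exact hT2K j
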